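/- Let f = Σ_{r=0}^n x_r^{d_1} g_r be a CW-Nagata polynomial of bidegree (d_1,d_2). For indices r ≠ s in {0,…,n} and multi-indices ρ = (ρ_1,…,ρ_m), σ = (σ_1,…,σ_m) with ρ_1+⋯+ρ_m = σ_1+⋯+σ_m = j, 1 ≤ j ≤ d_2, the binomial X_r^{d_1}U_1^{ρ_1}⋯U_m^{ρ_m} − X_s^{d_1}U_1^{σ_1}⋯U_m^{σ_m} lies in Ann(f) if and only if (U_1^{ρ_1}⋯U_m^{ρ_m})∘g_r = (U_1^{σ_1}⋯U_m^{σ_m})∘g_s; equivalently, either both contractions are zero, or u_1^{ρ_1}⋯u_m^{ρ_m} divides g_r, u_1^{σ_1}⋯u_m^{σ_m} divides g_s, and g_r/(u_1^{ρ_1}⋯u_m^{ρ_m}) = g_s/(u_1^{σ_1}⋯u_m^{σ_m}). -/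

import Mathlib

open MvPolynomial

namespace CW

variable {σ K : Type*} [CommSemiring K]

/-- A generic "monomial contraction-type" action of the polynomial ring on itself,
determined by a structure coefficient `ν c a` (the coefficient produced when the
operator monomial with exponent `a` acts on the monomial with exponent `c`). -/
noncomputable def genAct (ν : (σ →₀ ℕ) → (σ →₀ ℕ) → K) (α f : MvPolynomial σ K) :
    MvPolynomial σ K :=
  Finsupp.sum (AddMonoidAlgebra.coeff α) fun a ca =>
    Finsupp.sum (AddMonoidAlgebra.coeff f) fun c cf => monomial (c - a) (ν c a * (ca * cf))

theorem genAct_zero_left (ν : (σ →₀ ℕ) → (σ →₀ ℕ) → K) (f : MvPolynomial σ K) :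
    genAct ν 0 f = 0 := by
  unfold genAct
  rw [AddMonoidAlgebra.coeff_zero]
  exact Finsupp.sum_zero_index

theorem genAct_zero_right (ν : (σ →₀ ℕ) → (σ →₀ ℕ) → K) (α : MvPolynomial σ K) :
    genAct ν α 0 = 0 := by
  unfold genAct
  simp only [AddMonoidAlgebra.coeff_zero, Finsupp.sum_zero_index, Finsupp.sum, Finset.sum_const_zero,
    Finsupp.support_zero, Finset.sum_empty]

theorem genAct_add_left (ν : (σ →₀ ℕ) → (σ →₀ ℕ) → K) (α β f : MvPolynomial σ K) :
    genAct ν (α + β) f = genAct ν α f + genAct ν β f := by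
  unfold genAct
  rw [AddMonoidAlgebra.coeff_add]
  apply Finsupp.sum_add_index'
  · intro a
    simp only [mul_zero, zero_mul, map_zero, Finsupp.sum, Finset.sum_const_zero]
  · intro a b₁ b₂
    rw [← Finsupp.sum_add]
    apply Finsupp.sum_congr
    intro c _
    rw [add_mul, mul_add, map_add]

theorem genAct_add_right (ν : (σ →₀ ℕ) → (σ →₀ ℕ) → K) (α f g : MvPolynomial σ K) :
    genAct ν α (f + g) = genAct ν α f + genAct ν α g := by
  unfold genAct
  rw [← Finsupp.sum_add]
  apply Finsupp.sum_congr
  intro a _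
  rw [AddMonoidAlgebra.coeff_add]
  apply Finsupp.sum_add_index'
  · intro c
    simp only [mul_zero, map_zero]
  · intro c c₁ c₂
    rw [mul_add, mul_add, map_add]

theorem genAct_monomial (ν : (σ →₀ ℕ) → (σ →₀ ℕ) → K) (a c : σ →₀ ℕ) (r s : K) :
    genAct ν (monomial a r) (monomial c s) = monomial (c - a) (ν c a * (r * s)) := by
  unfold genAct
  rw [← single_eq_monomial a r, ← single_eq_monomial c s, AddMonoidAlgebra.coeff_single,
    AddMonoidAlgebra.coeff_single]
  rw [Finsupp.sum_single_index, Finsupp.sum_single_index]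
  · simp only [mul_zero, map_zero]
  · simp only [mul_zero, zero_mul, map_zero, Finsupp.sum_single_index, Finsupp.sum,
      Finset.sum_const_zero]

theorem genAct_mul {ν : (σ →₀ ℕ) → (σ →₀ ℕ) → K}
    (hν : ∀ c a b, ν c (a + b) = ν c b * ν (c - b) a) (α β f : MvPolynomial σ K) :
    genAct ν (α * β) f = genAct ν α (genAct ν β f) := by
  induction α using MvPolynomial.induction_on' with
  | add p q hp hq => rw [add_mul, genAct_add_left, hp, hq, genAct_add_left]
  | monomial a r =>
    induction β using MvPolynomial.induction_on' with
    | add p q hp hq =>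
      rw [mul_add, genAct_add_left, hp, hq, ← genAct_add_right, genAct_add_left]
    | monomial b s =>
      induction f using MvPolynomial.induction_on' with
      | add p q hp hq =>
        rw [genAct_add_right, hp, hq, ← genAct_add_right, ← genAct_add_right]
      | monomial c t =>
        rw [monomial_mul, genAct_monomial, genAct_monomial, genAct_monomial,
          show c - (a + b) = c - b - a from by rw [tsub_tsub, add_comm], hν]
        congr 1
        ring

/-- The annihilator ideal of `f` under the action `genAct ν`. -/
noncomputable def annG (ν : (σ →₀ ℕ) → (σ →₀ ℕ) → K)
    (hν : ∀ c a b, ν c (a + b) = ν c b * ν (c - b) a) (f : MvPolynomial σ K) :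
    Ideal (MvPolynomial σ K) where
  carrier := {α | genAct ν α f = 0}
  zero_mem' := genAct_zero_left ν f
  add_mem' := by
    intro a b ha hb
    show genAct ν (a + b) f = 0
    rw [genAct_add_left, ha, hb, add_zero]
  smul_mem' := by
    intro c α hα
    show genAct ν (c * α) f = 0
    rw [genAct_mul hν, hα, genAct_zero_right]

/-- Structure coefficient of the contraction (apolarity) action: `X^a` sends `x^c`
to `x^(c-a)` if `a ≤ c` and to `0` otherwise. -/
noncomputable def cnu (c a : σ →₀ ℕ) : K :=
  open scoped Classical in if a ≤ c then 1 else 0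

theorem cnu_mul (c a b : σ →₀ ℕ) :
    (cnu c (a + b) : K) = cnu c b * cnu (c - b) a := by
  classical
  unfold cnu
  by_cases hb : b ≤ c
  · by_cases ha : a ≤ c - b
    · have h : a + b ≤ c := (le_tsub_iff_right hb).mp ha
      simp [hb, ha, h]
    · have h : ¬ a + b ≤ c := fun h => ha ((le_tsub_iff_right hb).mpr h)
      simp [hb, ha, h]
  · have h : ¬ a + b ≤ c := fun h => hb (le_trans le_add_self h)
    simp [hb, h]

/-- The contraction action `α ∘ f`. -/
noncomputable def cAct (α f : MvPolynomial σ K) : MvPolynomial σ K :=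
  genAct cnu α f

/-- The annihilator `Ann(f)` of `f` under the contraction action, as an ideal. -/
noncomputable def cAnn (f : MvPolynomial σ K) : Ideal (MvPolynomial σ K) :=
  annG cnu cnu_mul f

theorem mem_cAnn {f α : MvPolynomial σ K} : α ∈ cAnn f ↔ cAct α f = 0 := Iff.rfl

/-- The `K`-submodule of polynomials all of whose monomials satisfy `P`. -/
noncomputable def bihom (K : Type*) [CommSemiring K] {σ : Type*} (P : (σ →₀ ℕ) → Prop) :
    Submodule K (MvPolynomial σ K) where
  carrier := {p | ∀ c ∈ p.support, P c}
  zero_mem' := by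
    intro c hc
    simp at hc
  add_mem' := by
    classical
    intro p q hp hq c hc
    rcases Finset.mem_union.mp (MvPolynomial.support_add hc) with h | h
    · exact hp c h
    · exact hq c h
  smul_mem' := by
    intro k p hp c hc
    exact hp c (MvPolynomial.support_smul hc)

/-- The x-degree of an exponent vector. -/
def degX {n m : ℕ} (c : (Fin (n + 1) ⊕ Fin m) →₀ ℕ) : ℕ := ∑ r, c (Sum.inl r)

/-- The u-degree of an exponent vector. -/
def degU {n m : ℕ} (c : (Fin (n + 1) ⊕ Fin m) →₀ ℕ) : ℕ := ∑ k, c (Sum.inr k)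

/-- The bihomogeneous component `T_(i,j)`. -/
noncomputable def Tbi (K : Type*) [CommSemiring K] {n m : ℕ} (i j : ℕ) :
    Submodule K (MvPolynomial (Fin (n + 1) ⊕ Fin m) K) :=
  bihom K fun c => degX c = i ∧ degU c = j

/-- The bigraded component `A_(i,j)` of `A = T ⧸ Ann(f)`: the image of `T_(i,j)`
in the quotient. -/
noncomputable def Abi {K : Type*} [Field K] {n m : ℕ}
    (f : MvPolynomial (Fin (n + 1) ⊕ Fin m) K) (i j : ℕ) :
    Submodule K (MvPolynomial (Fin (n + 1) ⊕ Fin m) K ⧸ cAnn f) :=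
  (Tbi K i j).map (Ideal.Quotient.mkₐ K (cAnn f)).toLinearMap

section Aux

theorem genAct_sub_left {σ K : Type*} [CommRing K] (ν : (σ →₀ ℕ) → (σ →₀ ℕ) → K)
    (α β f : MvPolynomial σ K) :
    genAct ν (α - β) f = genAct ν α f - genAct ν β f := by
  have h := genAct_add_left ν (α - β) β f
  rw [sub_add_cancel] at h
  rw [h]; ring

theorem genAct_sum {σ K : Type*} [CommSemiring K] (ν : (σ →₀ ℕ) → (σ →₀ ℕ) → K)
    (α : MvPolynomial σ K) {ι : Type*} (t : Finset ι) (F : ι → MvPolynomial σ K) :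
    genAct ν α (∑ i ∈ t, F i) = ∑ i ∈ t, genAct ν α (F i) := by
  classical
  induction t using Finset.induction with
  | empty => simp [genAct_zero_right]
  | insert _ _ ha ih =>
    rw [Finset.sum_insert ha, genAct_add_right, ih, Finset.sum_insert ha]

theorem mapDomain_inr_apply_inr {n m : ℕ} (ρ : Fin m →₀ ℕ) (k : Fin m) :
    (ρ.mapDomain (Sum.inr : Fin m → Fin (n + 1) ⊕ Fin m)) (Sum.inr k) = ρ k :=
  Finsupp.mapDomain_apply Sum.inr_injective ρ k

theorem mapDomain_inr_apply_inl {n m : ℕ} (ρ : Fin m →₀ ℕ) (i : Fin (n + 1)) :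
    (ρ.mapDomain (Sum.inr : Fin m → Fin (n + 1) ⊕ Fin m)) (Sum.inl i) = 0 :=
  Finsupp.mapDomain_notin_range _ _ (by simp)

theorem if_monomial_eq {K : Type*} [Field K] {σ : Type*} (P Q : Prop) [Decidable P]
    [Decidable Q] (A B : σ →₀ ℕ) :
    ((if P then monomial A (1 : K) else 0) = (if Q then monomial B (1 : K) else 0)) ↔
      ((¬P ∧ ¬Q) ∨ (P ∧ Q ∧ A = B)) := by
  by_cases hP : P <;> by_cases hQ : Q <;>
    simp [hP, hQ, MvPolynomial.monomial_eq_monomial_iff, MvPolynomial.monomial_eq_zero,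
      eq_comm (a := (0 : MvPolynomial σ K))]

open Classical in
theorem cAct_small {K : Type*} [Field K] {m : ℕ} (gr ρ : Fin m →₀ ℕ) :
    cAct (monomial ρ (1 : K)) (monomial gr 1) =
      if ρ ≤ gr then monomial (gr - ρ) 1 else 0 := by
  rw [cAct, genAct_monomial, cnu]
  by_cases h : ρ ≤ gr <;> simp [h]

open Classical in
theorem cAct_big {K : Type*} [Field K] {n m d₁ : ℕ} (hd₁ : 1 ≤ d₁)
    (g : Fin (n + 1) → (Fin m →₀ ℕ)) (r : Fin (n + 1)) (ρ : Fin m →₀ ℕ) :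
    cAct (X (Sum.inl r) ^ d₁ * monomial (ρ.mapDomain Sum.inr) (1 : K))
      (∑ t, X (Sum.inl t) ^ d₁ * monomial ((g t).mapDomain Sum.inr) 1) =
      if ρ ≤ g r then monomial ((g r - ρ).mapDomain Sum.inr) 1 else 0 := by
  have key : ∀ t : Fin (n + 1),
      X (Sum.inl t) ^ d₁ * monomial ((g t).mapDomain Sum.inr) (1 : K) =
      monomial (Finsupp.single (Sum.inl t) d₁ + (g t).mapDomain Sum.inr) 1 := by
    intro t
    rw [X_pow_eq_monomial, monomial_mul, one_mul]
  have keyρ : X (Sum.inl r) ^ d₁ * monomial (ρ.mapDomain Sum.inr) (1 : K) =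
      monomial (Finsupp.single (Sum.inl r) d₁ + ρ.mapDomain Sum.inr) 1 := by
    rw [X_pow_eq_monomial, monomial_mul, one_mul]
  set a : (Fin (n + 1) ⊕ Fin m) →₀ ℕ := Finsupp.single (Sum.inl r) d₁ + ρ.mapDomain Sum.inr
  set c : Fin (n + 1) → ((Fin (n + 1) ⊕ Fin m) →₀ ℕ) :=
    fun t => Finsupp.single (Sum.inl t) d₁ + (g t).mapDomain Sum.inr
  rw [keyρ, cAct]
  rw [show (∑ t, X (Sum.inl t) ^ d₁ * monomial ((g t).mapDomain Sum.inr) (1 : K)) =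
      ∑ t, monomial (c t) 1 from Finset.sum_congr rfl fun t _ => key t]
  rw [genAct_sum]
  have hne : ∀ t : Fin (n + 1), t ≠ r → ¬ a ≤ c t := by
    intro t ht hle
    have h1 := hle (Sum.inl r)
    have ha : a (Sum.inl r) = d₁ := by
      simp [a, Finsupp.add_apply, Finsupp.single_apply, mapDomain_inr_apply_inl]
    have hc : c t (Sum.inl r) = 0 := by
      simp [c, Finsupp.add_apply, Finsupp.single_apply, mapDomain_inr_apply_inl, ht]
    omega
  have hler : a ≤ c r ↔ ρ ≤ g r := by
    constructor
    · intro hle k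
      have := hle (Sum.inr k)
      simpa [a, c, Finsupp.add_apply, Finsupp.single_apply, mapDomain_inr_apply_inr]
        using this
    · intro hle x
      cases x with
      | inl i => simp [a, c, Finsupp.add_apply, mapDomain_inr_apply_inl]
      | inr k =>
        simpa [a, c, Finsupp.add_apply, Finsupp.single_apply, mapDomain_inr_apply_inr]
          using hle k
  have hsub : c r - a = (g r - ρ).mapDomain Sum.inr := by
    ext x
    cases x with
    | inl i =>
      simp [Finsupp.tsub_apply, a, c, Finsupp.add_apply, mapDomain_inr_apply_inl]
    | inr k =>
      simp [Finsupp.tsub_apply, a, c, Finsupp.add_apply, Finsupp.single_apply,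
        mapDomain_inr_apply_inr]
  rw [Finset.sum_eq_single r]
  · rw [genAct_monomial, hsub, cnu]
    by_cases h : ρ ≤ g r
    · rw [if_pos ((hler).mpr h), if_pos h, mul_one, mul_one]
    · rw [if_neg (fun hc => h (hler.mp hc)), if_neg h, zero_mul, monomial_zero]
  · intro t _ ht
    rw [genAct_monomial, cnu, if_neg (hne t ht), zero_mul, monomial_zero]
  · intro h
    exact absurd (Finset.mem_univ r) h

end Aux

open MvPolynomial in
theorem stmt_13 {K : Type*} [Field K] [CharZero K] (n m d₁ d₂ : ℕ)
    (hd₁ : 1 ≤ d₁) (hd₂ : 2 ≤ d₂)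
    (g : Fin (n + 1) → (Fin m →₀ ℕ))
    (hgdeg : ∀ r, (∑ k, g r k) = d₂)
    (hginj : Function.Injective g)
    (f : MvPolynomial (Fin (n + 1) ⊕ Fin m) K)
    (hf : f = ∑ r, X (Sum.inl r) ^ d₁ * monomial ((g r).mapDomain Sum.inr) 1)
    (r s : Fin (n + 1)) (hrs : r ≠ s) (ρ τ : Fin m →₀ ℕ) (j : ℕ)
    (hρ : (∑ k, ρ k) = j) (hτ : (∑ k, τ k) = j) (hj : 1 ≤ j) (hjd : j ≤ d₂) :
    ((X (Sum.inl r) ^ d₁ * monomial (ρ.mapDomain Sum.inr) 1 -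
        X (Sum.inl s) ^ d₁ * monomial (τ.mapDomain Sum.inr) 1 ∈ cAnn f) ↔
      cAct (monomial ρ (1 : K)) (monomial (g r) 1) =
        cAct (monomial τ (1 : K)) (monomial (g s) 1)) ∧
    (cAct (monomial ρ (1 : K)) (monomial (g r) 1) =
        cAct (monomial τ (1 : K)) (monomial (g s) 1) ↔
      ((¬ ρ ≤ g r ∧ ¬ τ ≤ g s) ∨ (ρ ≤ g r ∧ τ ≤ g s ∧ g r - ρ = g s - τ))) := by
  classical
  have h2 : (cAct (monomial ρ (1 : K)) (monomial (g r) 1) =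
      cAct (monomial τ (1 : K)) (monomial (g s) 1)) ↔
      ((¬ ρ ≤ g r ∧ ¬ τ ≤ g s) ∨ (ρ ≤ g r ∧ τ ≤ g s ∧ g r - ρ = g s - τ)) := by
    rw [cAct_small, cAct_small, if_monomial_eq]
  refine ⟨?_, h2⟩
  have hsub : ∀ A B F : MvPolynomial (Fin (n + 1) ⊕ Fin m) K,
      cAct (A - B) F = cAct A F - cAct B F := fun A B F => genAct_sub_left cnu A B F
  rw [mem_cAnn, hf, hsub, cAct_big hd₁ g r ρ, cAct_big hd₁ g s τ, sub_eq_zero,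
    if_monomial_eq, (Finsupp.mapDomain_injective Sum.inr_injective).eq_iff, h2]

end CW
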